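/- Among all trees on n vertices, the path P_n has the smallest number of independent sets: for every tree T on n vertices, i(T) ≥ i(P_n). -/

import Mathlib

open SimpleGraph

/-- Number of independent sets of a graph (including the empty set). -/
noncomputable def indepCount {V : Type*} (H : SimpleGraph V) : ℕ :=
  Nat.card {s : Finset V // ∀ u ∈ s, ∀ v ∈ s, ¬ H.Adj u v}

lemma indepCount_congr {V W : Type*} {G : SimpleGraph V} {H : SimpleGraph W} (e : G ≃g H) :
    indepCount G = indepCount H := by
  apply Nat.card_congr
  refine Equiv.subtypeEquiv e.toEquiv.finsetCongr ?_
  intro s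
  simp only [Equiv.finsetCongr_apply, Finset.mem_map_equiv]
  constructor
  · intro h u hu w hw hadj
    exact h _ hu _ hw (e.symm.map_adj_iff.mpr hadj)
  · intro h u hu w hw hadj
    have := h (e.toEquiv u) ((e.toEquiv.symm_apply_apply u).symm ▸ hu) (e.toEquiv w) ((e.toEquiv.symm_apply_apply w).symm ▸ hw)
    exact this (e.map_adj_iff.mpr hadj)

lemma indepCount_decomp {V : Type*} [Fintype V] [DecidableEq V] (G : SimpleGraph V) (v : V) :
    indepCount G =
      indepCount (G.induce {x | x ≠ v ∧ ¬ G.Adj v x}) +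
      indepCount (G.induce {x | x ≠ v}) := by
  classical
  have e : {s : Finset V // ∀ u ∈ s, ∀ w ∈ s, ¬ G.Adj u w} ≃
      ({s : Finset {x | x ≠ v ∧ ¬ G.Adj v x} //
          ∀ u ∈ s, ∀ w ∈ s, ¬ (G.induce {x | x ≠ v ∧ ¬ G.Adj v x}).Adj u w} ⊕
       {s : Finset {x | x ≠ v} // ∀ u ∈ s, ∀ w ∈ s, ¬ (G.induce {x | x ≠ v}).Adj u w}) := by
    refine
      { toFun := fun s => if h : v ∈ s.1 then
          Sum.inl ⟨(s.1.erase v).subtype _, ?_⟩ else Sum.inr ⟨s.1.subtype _, ?_⟩,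
        invFun := fun t => Sum.elim
          (fun t => ⟨insert v (t.1.map (Function.Embedding.subtype _)), ?_⟩)
          (fun t => ⟨t.1.map (Function.Embedding.subtype _), ?_⟩) t,
        left_inv := ?_, right_inv := ?_ }
    · intro u hu w hw
      simp only [Finset.mem_subtype, Finset.mem_erase] at hu hw
      simp only [comap_adj, Function.Embedding.coe_subtype]
      exact s.2 _ hu.2 _ hw.2
    · intro u hu w hw
      simp only [Finset.mem_subtype] at hu hw
      simp only [comap_adj, Function.Embedding.coe_subtype]
      exact s.2 _ hu _ hw
    · intro u hu w hw
      simp only [Finset.mem_insert, Finset.mem_map,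
        Function.Embedding.coe_subtype] at hu hw
      rcases hu with rfl | ⟨a, ha, rfl⟩
      · rcases hw with rfl | ⟨b, hb, rfl⟩
        · exact G.irrefl
        · exact b.2.2
      · rcases hw with rfl | ⟨b, hb, rfl⟩
        · exact fun hadj => a.2.2 hadj.symm
        · intro hadj
          exact t.2 a ha b hb (by simpa using hadj)
    · intro u hu w hw
      simp only [Finset.mem_map, Function.Embedding.coe_subtype] at hu hw
      obtain ⟨a, ha, rfl⟩ := hu
      obtain ⟨b, hb, rfl⟩ := hw
      intro hadj
      exact t.2 a ha b hb (by simpa using hadj)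
    · rintro ⟨s, hs⟩
      by_cases h : v ∈ s
      · simp only [h, dif_pos, Sum.elim_inl]
        apply Subtype.ext
        simp only
        rw [Finset.subtype_map, Finset.filter_true_of_mem, Finset.insert_erase h]
        intro x hx
        rw [Finset.mem_erase] at hx
        exact ⟨hx.1, fun hadj => hs v h x hx.2 hadj⟩
      · simp only [h, dif_neg, Sum.elim_inr, not_false_iff]
        apply Subtype.ext
        simp only
        rw [Finset.subtype_map, Finset.filter_true_of_mem]
        intro x hx
        exact fun hxv => h (hxv ▸ hx)
    · rintro (⟨t, ht⟩ | ⟨t, ht⟩)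
      · simp only [Sum.elim_inl]
        have hv : v ∉ t.map (Function.Embedding.subtype _) := by
          intro hv
          obtain ⟨a, _, ha⟩ := Finset.mem_map.mp hv
          exact a.2.1 ha
        refine (dif_pos (Finset.mem_insert_self v _)).trans ?_
        congr 1
        apply Subtype.ext
        simp only
        rw [Finset.erase_insert hv]
        ext a
        simp [Finset.mem_subtype]
        intro _
        exact a.2
      · simp only [Sum.elim_inr]
        have hv : v ∉ t.map (Function.Embedding.subtype _) := by
          intro hv
          obtain ⟨a, _, ha⟩ := Finset.mem_map.mp hv
          exact a.2 ha
        refine (dif_neg hv).trans ?_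
        congr 1
        apply Subtype.ext
        simp only
        ext a
        simp [Finset.mem_subtype]
        intro _
        exact a.2
  rw [indepCount, Nat.card_congr e, Nat.card_sum, indepCount, indepCount]

lemma isAcyclic_induce {V : Type*} {G : SimpleGraph V} (hG : G.IsAcyclic) (s : Set V) :
    (G.induce s).IsAcyclic := by
  intro v c hc
  have f : G.induce s ↪g G := SimpleGraph.Embedding.induce s
  have hinj : Function.Injective f.toHom := f.injective
  exact hG _ ((Walk.map_isCycle_iff_of_injective hinj).mpr hc)

lemma exists_leaf {V : Type*} [Fintype V] {G : SimpleGraph V} (hG : G.IsAcyclic)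
    {x y : V} (hxy : G.Adj x y) :
    ∃ v w, G.Adj v w ∧ ∀ u, G.Adj v u → u = w := by
  classical
  set S : Set ℕ := {n | ∃ (a : V) (b : V) (p : G.Walk a b), p.IsPath ∧ p.length = n} with hS
  have hone : (1 : ℕ) ∈ S := ⟨x, y, Walk.cons hxy Walk.nil, by simp [Walk.isPath_def, hxy.ne], rfl⟩
  have hSne : S.Nonempty := ⟨1, hone⟩
  have hbdd : BddAbove S := by
    refine ⟨Fintype.card V, ?_⟩
    rintro n ⟨a, b, p, hp, rfl⟩
    exact le_of_lt hp.length_lt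
  obtain ⟨a, b, p, hp, hlen⟩ := Nat.sSup_mem hSne hbdd
  have h1 : 1 ≤ sSup S := le_csSup hbdd hone
  obtain ⟨q, hqp, hql⟩ : ∃ q : G.Walk b a, q.IsPath ∧ q.length = sSup S :=
    ⟨p.reverse, hp.reverse, by simp [hlen]⟩
  revert hqp hql
  cases q with
  | nil => intro hqp hql; simp at hql; omega
  | @cons _ w _ hbw q' =>
    intro hqp hql
    refine ⟨b, w, hbw, ?_⟩
    intro u hu
    by_contra hne
    have hq'p : q'.IsPath ∧ b ∉ q'.support := (Walk.cons_isPath_iff _ _).mp hqp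
    by_cases husup : u ∈ (Walk.cons hbw q').support
    · -- u on the path: build a cycle
      have hub : u ≠ b := hu.ne'
      have hu' : u ∈ q'.support := by
        have h2 : u ∈ b :: q'.support := by simpa using husup
        rcases List.mem_cons.mp h2 with h3 | h3
        · exact absurd h3 hub
        · exact h3
      set t := q'.takeUntil u hu' with ht
      have htp : t.IsPath := hq'p.1.takeUntil hu'
      have hbt : b ∉ t.support := fun hb => hq'p.2 (Walk.support_takeUntil_subset _ hu' hb)
      have hcp : (Walk.cons hbw t).IsPath := (Walk.cons_isPath_iff _ _).mpr ⟨htp, hbt⟩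
      have hcyc : (Walk.cons hu.symm (Walk.cons hbw t)).IsCycle := by
        rw [Walk.cons_isCycle_iff]
        refine ⟨hcp, ?_⟩
        intro hmem
        rw [Walk.edges_cons] at hmem
        rcases List.mem_cons.mp hmem with h | h
        · rw [Sym2.eq_iff] at h
          rcases h with ⟨h1', h2'⟩ | ⟨h1', h2'⟩
          · exact hub h1'
          · exact hne h1'
        · exact hbt (Walk.snd_mem_support_of_mem_edges t h)
      exact hG _ hcyc
    · -- u off the path: extend to a longer path
      have hlong : (Walk.cons hu.symm (Walk.cons hbw q')).IsPath :=
        (Walk.cons_isPath_iff _ _).mpr ⟨hqp, husup⟩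
      have : sSup S + 1 ∈ S := ⟨u, a, _, hlong, by simp [hql]⟩
      have := le_csSup hbdd this
      omega

lemma indepCount_eq_two_pow {V : Type*} [Fintype V] {G : SimpleGraph V}
    (h : ∀ x y : V, ¬ G.Adj x y) : indepCount G = 2 ^ Fintype.card V := by
  rw [indepCount]
  have e : {s : Finset V // ∀ u ∈ s, ∀ w ∈ s, ¬ G.Adj u w} ≃ Finset V :=
    Equiv.subtypeUnivEquiv (fun s u _ w _ => h u w)
  rw [Nat.card_congr e, Nat.card_eq_fintype_card, Fintype.card_finset]

lemma fib_le_two_pow : ∀ n : ℕ, Nat.fib (n + 2) ≤ 2 ^ n := by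
  intro n
  induction n using Nat.strong_induction_on with
  | _ n ih =>
    match n with
    | 0 => simp
    | 1 => simp [Nat.fib]
    | (m+2) =>
      have h1 : Nat.fib (m + 3) ≤ 2 ^ (m + 1) := ih (m+1) (by omega)
      have h2 : Nat.fib (m + 2) ≤ 2 ^ m := ih m (by omega)
      have h3 : Nat.fib (m + 2 + 2) = Nat.fib (m + 2) + Nat.fib (m + 3) := Nat.fib_add_two
      have hp : (2:ℕ) ^ (m + 2) = 2 ^ m + (2 ^ m + 2 ^ (m+1)) := by ring
      omega

universe u

lemma forest_bound (N : ℕ) : ∀ {V : Type u} [Fintype V] (G : SimpleGraph V),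
    G.IsAcyclic → Fintype.card V = N → Nat.fib (N + 2) ≤ indepCount G := by
  induction N using Nat.strong_induction_on with
  | _ N ih =>
    intro V _ G hG hcard
    classical
    by_cases hedge : ∃ x y, G.Adj x y
    · obtain ⟨x, y, hxy⟩ := hedge
      obtain ⟨v, w, hvw, hleaf⟩ := exists_leaf hG hxy
      have hN2 : 2 ≤ N := hcard ▸ Fintype.one_lt_card_iff_nontrivial.mpr ⟨⟨v, w, hvw.ne⟩⟩
      obtain ⟨M, rfl⟩ : ∃ M, N = M + 2 := ⟨N - 2, by omega⟩
      have hBset : {x : V | x ≠ v ∧ ¬ G.Adj v x} = {x : V | x ≠ v ∧ x ≠ w} := by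
        ext z
        simp only [Set.mem_setOf_eq, and_congr_right_iff]
        intro _
        constructor
        · intro hna hzw
          exact hna (hzw ▸ hvw)
        · intro hzw hadj
          exact hzw (hleaf z hadj)
      have cardA : Fintype.card {x : V | x ≠ v} = M + 1 := by
        have h2 : Finset.univ.filter (fun x : V => x ∈ {x : V | x ≠ v}) = Finset.univ.erase v := by
          ext z; simp [Finset.mem_erase, and_comm]
        rw [Fintype.card_subtype, h2, Finset.card_erase_of_mem (Finset.mem_univ v),
          Finset.card_univ, hcard]
        omega
      have cardB : Fintype.card {x : V | x ≠ v ∧ x ≠ w} = M := by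
        have h2 : Finset.univ.filter (fun x : V => x ∈ {x : V | x ≠ v ∧ x ≠ w}) =
            (Finset.univ.erase v).erase w := by
          ext z; simp [Finset.mem_erase]; tauto
        rw [Fintype.card_subtype, h2, Finset.card_erase_of_mem (by simp [hvw.ne']),
          Finset.card_erase_of_mem (Finset.mem_univ v), Finset.card_univ, hcard]
        omega
      rw [indepCount_decomp G v, hBset]
      have hA := ih (M + 1) (by omega) (G.induce {x : V | x ≠ v})
        (isAcyclic_induce hG _) cardA
      have hB := ih M (by omega) (G.induce {x : V | x ≠ v ∧ x ≠ w})
        (isAcyclic_induce hG _) cardB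
      calc Nat.fib (M + 2 + 2) = Nat.fib (M + 2) + Nat.fib (M + 2 + 1) := Nat.fib_add_two
        _ ≤ _ := add_le_add hB hA
    · push_neg at hedge
      rw [indepCount_eq_two_pow hedge, hcard]
      exact fib_le_two_pow N

lemma indepCount_pathGraph : ∀ n : ℕ, indepCount (pathGraph n) = Nat.fib (n + 2) := by
  intro n
  induction n using Nat.strong_induction_on with
  | _ n ih =>
    match n with
    | 0 =>
      have h : ∀ x y : Fin 0, ¬ (pathGraph 0).Adj x y := fun x => x.elim0
      rw [indepCount_eq_two_pow h]
      simp
    | 1 =>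
      have h : ∀ x y : Fin 1, ¬ (pathGraph 1).Adj x y := by
        intro x y h
        rw [pathGraph_adj] at h
        have := x.isLt
        have := y.isLt
        omega
      rw [indepCount_eq_two_pow h]
      simp [Nat.fib]
    | (m+2) =>
      classical
      rw [indepCount_decomp (pathGraph (m+2)) (Fin.last (m+1))]
      have hBset : {x : Fin (m+2) | x ≠ Fin.last (m+1) ∧
          ¬ (pathGraph (m+2)).Adj (Fin.last (m+1)) x} = {x : Fin (m+2) | x.val < m} := by
        ext z
        simp only [Set.mem_setOf_eq, pathGraph_adj, Fin.ext_iff, Fin.val_last]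
        have := z.isLt
        have hl : ((Fin.last (m+1)) : Fin (m+2)).val = m + 1 := rfl
        constructor
        · rintro ⟨h1, h2⟩
          push_neg at h2
          omega
        · intro h
          refine ⟨by omega, ?_⟩
          push_neg
          omega
      rw [hBset]
      have isoA : (pathGraph (m+2)).induce {x : Fin (m+2) | x ≠ Fin.last (m+1)} ≃g
          pathGraph (m+1) := by
        refine ⟨⟨fun x => ⟨x.1.1, Fin.val_lt_last x.2⟩,
          fun i => ⟨⟨i.1, by omega⟩, by
            intro h
            have := congrArg Fin.val h
            simp at this
            omega⟩, ?_, ?_⟩, ?_⟩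
        · intro x; ext; simp
        · intro i; ext; simp
        · intro a b
          simp [pathGraph_adj]
      have isoB : (pathGraph (m+2)).induce {x : Fin (m+2) | x.val < m} ≃g pathGraph m := by
        refine ⟨⟨fun x => ⟨x.1.1, x.2⟩,
          fun i => ⟨⟨i.1, by omega⟩, by exact i.isLt⟩, ?_, ?_⟩, ?_⟩
        · intro x; ext; simp
        · intro i; ext; simp
        · intro a b
          simp [pathGraph_adj]
      rw [indepCount_congr isoA, indepCount_congr isoB, ih m (by omega), ih (m+1) (by omega)]
      exact (Nat.fib_add_two).symm

theorem stmt_8 {V : Type*} [Fintype V] (T : SimpleGraph V) (hT : T.IsTree) (n : ℕ)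
    (hn : Fintype.card V = n) :
    indepCount T ≥ indepCount (SimpleGraph.pathGraph n) := by
  rw [indepCount_pathGraph]
  exact forest_bound n T hT.IsAcyclic hn
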